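/- arXiv:2602.17651 — 3 statements merged into one kernel-verified Lean document; each statement's English description precedes it below -/
import Mathlib

section
/- Let m be a positive natural number, p ∈ [0,1] a real number, and let X_1, …, X_m be independent Bernoulli(p) random variables on a probability space, with X := Σ_{i=1}^m X_i. Then for every real δ with 0 < δ < 1, the probability that X ≥ (1+δ)·m·p is at most exp(−δ²·m·p/3). -/
open MeasureTheory ProbabilityTheory

lemma exp_two_thirds_le_two : Real.exp (2/3) ≤ 2 := by
  by_contra h
  push_neg at h
  have h3 : (2:ℝ) ^ (3:ℕ) < Real.exp (2/3) ^ (3:ℕ) :=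
    pow_lt_pow_left₀ h (by norm_num) (by norm_num)
  have e1 : Real.exp (2/3) ^ (3:ℕ) = Real.exp 2 := by
    rw [← Real.exp_nat_mul]; norm_num
  have e2 : Real.exp 1 ^ (2:ℕ) = Real.exp 2 := by
    rw [← Real.exp_nat_mul]; norm_num
  rw [e1] at h3
  nlinarith [Real.exp_one_lt_d9, Real.exp_pos 1]

lemma log_ge_aux {x : ℝ} (hx0 : 0 ≤ x) (hx1 : x ≤ 1) :
    2 * x / 3 ≤ Real.log (1 + x) := by
  have h1x : (0:ℝ) < 1 + x := by linarith
  have hconv := convexOn_exp.2 (Set.mem_univ (0:ℝ)) (Set.mem_univ (2/3:ℝ))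
    (by linarith : (0:ℝ) ≤ 1 - x) hx0 (by ring)
  simp only [smul_eq_mul, mul_zero, zero_add, Real.exp_zero, mul_one] at hconv
  have hexp : Real.exp (x * (2/3)) ≤ 1 + x := by
    nlinarith [exp_two_thirds_le_two, Real.exp_pos (2/3)]
  calc 2 * x / 3 = Real.log (Real.exp (x * (2/3))) := by rw [Real.log_exp]; ring
    _ ≤ Real.log (1 + x) := Real.log_le_log (Real.exp_pos _) hexp

lemma chernoff_ineq_aux {δ : ℝ} (hδ0 : 0 ≤ δ) (hδ1 : δ ≤ 1) :
    δ + δ ^ 2 / 3 ≤ (1 + δ) * Real.log (1 + δ) := by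
  set g : ℝ → ℝ := fun x => (1 + x) * Real.log (1 + x) - x - x ^ 2 / 3 with hg
  have hmono : MonotoneOn g (Set.Icc (0:ℝ) 1) := by
    have hcont : ContinuousOn g (Set.Icc (0:ℝ) 1) := by
      apply ContinuousOn.sub
      apply ContinuousOn.sub
      · exact (continuous_const.add continuous_id).continuousOn.mul
          ((continuous_const.add continuous_id).continuousOn.log
            (fun x hx => by rcases hx with ⟨h0, _⟩; simp; positivity))
      · exact continuousOn_id
      · exact (continuous_pow 2).continuousOn.div_const 3
    have hderiv : ∀ x ∈ Set.Ioo (0:ℝ) 1,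
        HasDerivAt g (Real.log (1 + x) - 2 * x / 3) x := by
      intro x hx
      have h1x : (1:ℝ) + x ≠ 0 := by rcases hx with ⟨h0, _⟩; positivity
      have h1 : HasDerivAt (fun y : ℝ => 1 + y) 1 x := (hasDerivAt_id x).const_add 1
      have h2 : HasDerivAt (fun y : ℝ => Real.log (1 + y)) (1 / (1 + x)) x := h1.log h1x
      have h3 := (h1.mul h2).sub (hasDerivAt_id x)
      have h4 := h3.sub ((hasDerivAt_pow 2 x).div_const 3)
      convert h4 using 1
      · rfl
      · rfl
      · rfl
      field_simp
      norm_num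
      ring
    apply monotoneOn_of_deriv_nonneg (convex_Icc 0 1) hcont
    · intro x hx
      rw [interior_Icc] at hx
      exact (hderiv x hx).differentiableAt.differentiableWithinAt
    · intro x hx
      rw [interior_Icc] at hx
      rw [(hderiv x hx).deriv]
      have := log_ge_aux hx.1.le hx.2.le
      linarith
  have h0 : g 0 = 0 := by simp [hg]
  have := hmono (Set.mem_Icc.2 ⟨le_refl 0, zero_le_one⟩) (Set.mem_Icc.2 ⟨hδ0, hδ1⟩) hδ0
  rw [h0] at this
  simp only [hg] at this
  linarith

/-- Multiplicative upper-tail Chernoff bound for sums of independent Bernoulli(p)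
random variables (Theorem 3.6, part 1). -/
theorem chernoff_mult_upper
    {Ω : Type*} [MeasurableSpace Ω] (μ : Measure Ω) [IsProbabilityMeasure μ]
    (m : ℕ) (hm : 0 < m) (p : ℝ) (hp0 : 0 ≤ p) (hp1 : p ≤ 1)
    (X : Fin m → Ω → ℝ)
    (hmeas : ∀ i, Measurable (X i))
    (hindep : iIndepFun X μ)
    (hval : ∀ i, ∀ ω, X i ω = 0 ∨ X i ω = 1)
    (hbern : ∀ i, μ {ω | X i ω = 1} = ENNReal.ofReal p)
    (δ : ℝ) (hδ0 : 0 < δ) (hδ1 : δ < 1) :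
    μ {ω | (1 + δ) * m * p ≤ ∑ i, X i ω}
      ≤ ENNReal.ofReal (Real.exp (-(δ ^ 2 * m * p) / 3)) := by
  classical
  set t := Real.log (1 + δ) with htdef
  have h1δ : (0:ℝ) < 1 + δ := by linarith
  have het : Real.exp t = 1 + δ := Real.exp_log h1δ
  have ht0 : 0 < t := Real.log_pos (by linarith)
  -- bounds on X i
  have hXbd : ∀ i ω, 0 ≤ X i ω ∧ X i ω ≤ 1 := by
    intro i ω; rcases hval i ω with h | h <;> rw [h] <;> norm_num
  -- integrability of exp (t * X i)
  have hintE : ∀ i, Integrable (fun ω => Real.exp (t * X i ω)) μ := by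
    intro i
    refine Integrable.mono' (integrable_const (Real.exp t))
      ((Real.measurable_exp.comp ((hmeas i).const_mul t)).aestronglyMeasurable)
      (ae_of_all _ fun ω => ?_)
    rw [Real.norm_eq_abs, abs_of_pos (Real.exp_pos _)]
    exact Real.exp_le_exp.2 (by nlinarith [(hXbd i ω).1, (hXbd i ω).2])
  -- integrability of X i
  have hintX : ∀ i, Integrable (X i) μ := by
    intro i
    refine Integrable.mono' (integrable_const 1) (hmeas i).aestronglyMeasurable
      (ae_of_all _ fun ω => ?_)
    rw [Real.norm_eq_abs, abs_of_nonneg (hXbd i ω).1]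
    exact (hXbd i ω).2
  -- expectation of X i
  have hEX : ∀ i, ∫ ω, X i ω ∂μ = p := by
    intro i
    have hset : MeasurableSet (X i ⁻¹' {1}) := (hmeas i) (measurableSet_singleton 1)
    have hfun : (fun ω => X i ω) = Set.indicator (X i ⁻¹' {1}) (fun _ => (1:ℝ)) := by
      funext ω
      rcases hval i ω with h | h
      · rw [h, Set.indicator_apply]
        simp only [Set.mem_preimage, Set.mem_singleton_iff, h]
        norm_num
      · rw [h, Set.indicator_apply]
        simp only [Set.mem_preimage, Set.mem_singleton_iff, h]
        norm_num
    rw [hfun, MeasureTheory.integral_indicator_const _ hset]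
    have : X i ⁻¹' {1} = {ω | X i ω = 1} := rfl
    rw [this, measureReal_def, hbern i, smul_eq_mul, mul_one, ENNReal.toReal_ofReal hp0]
  -- mgf of each X i
  have hmgf : ∀ i, mgf (X i) μ t = 1 + p * (Real.exp t - 1) := by
    intro i
    have heq : (fun ω => Real.exp (t * X i ω))
        = fun ω => 1 + (Real.exp t - 1) * X i ω := by
      funext ω
      rcases hval i ω with h | h <;> rw [h] <;> simp
    rw [mgf, heq, integral_add (integrable_const 1) ((hintX i).const_mul _),
      integral_const, integral_const_mul, hEX i]
    simp [mul_comm]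
  -- integrability of exp (t * sum)
  have hintS : Integrable (fun ω => Real.exp (t * (∑ i, X i) ω)) μ :=
    hindep.integrable_exp_mul_sum hmeas (fun i _ => hintE i)
  -- Markov / Chernoff
  have hkey := measure_ge_le_exp_mul_mgf (μ := μ) (X := ∑ i, X i)
    ((1 + δ) * m * p) ht0.le hintS
  have hsum : mgf (∑ i, X i) μ t = (1 + p * (Real.exp t - 1)) ^ m := by
    rw [hindep.mgf_sum hmeas]
    rw [Finset.prod_congr rfl (fun i _ => hmgf i), Finset.prod_const,
      Finset.card_univ, Fintype.card_fin]
  have hsetEq : {ω | (1 + δ) * m * p ≤ ∑ i, X i ω}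
      = {ω | (1 + δ) * m * p ≤ (∑ i, X i) ω} := by
    ext ω; simp [Finset.sum_apply]
  -- bound the rhs
  have hstep : Real.exp (-t * ((1 + δ) * m * p)) * mgf (∑ i, X i) μ t
      ≤ Real.exp (-(δ ^ 2 * m * p) / 3) := by
    rw [hsum]
    have h1 : (1 + p * (Real.exp t - 1)) ^ m ≤ Real.exp (p * (Real.exp t - 1)) ^ m := by
      apply pow_le_pow_left₀
      · nlinarith [Real.exp_pos t, het]
      · linarith [Real.add_one_le_exp (p * (Real.exp t - 1))]
    have h2 : Real.exp (p * (Real.exp t - 1)) ^ m = Real.exp (m * (p * (Real.exp t - 1))) := by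
      rw [← Real.exp_nat_mul]
    calc Real.exp (-t * ((1 + δ) * m * p)) * (1 + p * (Real.exp t - 1)) ^ m
        ≤ Real.exp (-t * ((1 + δ) * m * p)) * Real.exp (m * (p * (Real.exp t - 1))) := by
          rw [← h2]; exact mul_le_mul_of_nonneg_left h1 (Real.exp_nonneg _)
      _ = Real.exp (-t * ((1 + δ) * m * p) + m * (p * (Real.exp t - 1))) := by
          rw [← Real.exp_add]
      _ ≤ Real.exp (-(δ ^ 2 * m * p) / 3) := by
          apply Real.exp_le_exp.2
          have haux := chernoff_ineq_aux hδ0.le hδ1.le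
          have hmp : (0:ℝ) ≤ (m:ℝ) * p := by positivity
          have := mul_le_mul_of_nonneg_left haux hmp
          rw [het]
          nlinarith [this]
  rw [hsetEq]
  rw [ENNReal.le_ofReal_iff_toReal_le (measure_ne_top μ _) (Real.exp_nonneg _)]
  exact hkey.trans hstep
end

section
/- Let m be a positive natural number, p ∈ [0,1] a real number, and let X_1, …, X_m be independent Bernoulli(p) random variables on a probability space, with X := Σ_{i=1}^m X_i. Then for every real δ with 0 < δ < 1, the probability that X ≤ (1−δ)·m·p is at most exp(−δ²·m·p/2). -/
open MeasureTheory ProbabilityTheory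

lemma chernoff_key {δ : ℝ} (h0 : 0 < δ) (h1 : δ < 1) :
    δ^2/2 ≤ (1-δ)*Real.log (1-δ) + δ := by
  set f : ℝ → ℝ := fun x => (1-x)*Real.log (1-x) + x - x^2/2 with hf
  have hderiv : ∀ x ∈ Set.Ico (0:ℝ) 1, HasDerivAt f (-Real.log (1-x) - x) x := by
    intro x hx
    have hx1 : (0:ℝ) < 1 - x := by linarith [hx.2]
    have h1 : HasDerivAt (fun y : ℝ => 1 - y) (-1) x := by
      simpa using (hasDerivAt_id x).const_sub 1
    have h2 : HasDerivAt (fun y : ℝ => Real.log (1 - y)) (-1/(1-x)) x := by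
      simpa [div_eq_mul_inv, Function.comp_def] using (Real.hasDerivAt_log hx1.ne').comp x h1
    have h3 : HasDerivAt (fun y : ℝ => (1-y)*Real.log (1-y))
        ((-1) * Real.log (1-x) + (1-x) * (-1/(1-x))) x := h1.mul h2
    have h4 : HasDerivAt (fun y : ℝ => y^2/2) x x := by
      simpa using ((hasDerivAt_pow 2 x).div_const 2)
    have := (h3.add (hasDerivAt_id x)).sub h4
    convert this using 1
    · rfl
    · rfl
    · rfl
    field_simp [hx1.ne']
    ring
  have hmono : MonotoneOn f (Set.Icc 0 δ) := by
    apply monotoneOn_of_deriv_nonneg (convex_Icc 0 δ)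
    · intro x hx
      exact (hderiv x ⟨hx.1, lt_of_le_of_lt hx.2 h1⟩).continuousAt.continuousWithinAt
    · intro x hx
      rw [interior_Icc] at hx
      exact (hderiv x ⟨hx.1.le, hx.2.trans h1⟩).differentiableAt.differentiableWithinAt
    · intro x hx
      rw [interior_Icc] at hx
      have hx1 : (0:ℝ) < 1 - x := by linarith [hx.2]
      rw [(hderiv x ⟨hx.1.le, hx.2.trans h1⟩).deriv]
      have := Real.log_le_sub_one_of_pos hx1
      linarith
  have h := hmono (Set.left_mem_Icc.2 h0.le) (Set.right_mem_Icc.2 h0.le) h0.le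
  simp only [hf, Real.log_one, mul_one, mul_zero, sub_zero, zero_mul] at h
  norm_num at h
  linarith

/-- Multiplicative lower-tail Chernoff bound for sums of independent Bernoulli(p)
random variables (Theorem 3.6, part 2). -/
theorem chernoff_mult_lower
    {Ω : Type*} [MeasurableSpace Ω] (μ : Measure Ω) [IsProbabilityMeasure μ]
    (m : ℕ) (hm : 0 < m) (p : ℝ) (hp0 : 0 ≤ p) (hp1 : p ≤ 1)
    (X : Fin m → Ω → ℝ)
    (hmeas : ∀ i, Measurable (X i))
    (hindep : iIndepFun X μ)
    (hval : ∀ i, ∀ ω, X i ω = 0 ∨ X i ω = 1)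
    (hbern : ∀ i, μ {ω | X i ω = 1} = ENNReal.ofReal p)
    (δ : ℝ) (hδ0 : 0 < δ) (hδ1 : δ < 1) :
    μ {ω | ∑ i, X i ω ≤ (1 - δ) * m * p}
      ≤ ENNReal.ofReal (Real.exp (-(δ ^ 2 * m * p) / 2)) := by
  set t : ℝ := Real.log (1 - δ) with htdef
  have h1δ : (0:ℝ) < 1 - δ := by linarith
  have ht : t ≤ 0 := Real.log_nonpos (by linarith) (by linarith)
  have het : Real.exp t = 1 - δ := Real.exp_log h1δ
  -- X i as an indicator
  have hXint : ∀ i, Integrable (X i) μ := by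
    intro i
    have hs : MeasurableSet {ω | X i ω = 1} := (hmeas i) (measurableSet_singleton 1)
    have : X i = Set.indicator {ω | X i ω = 1} (fun _ => (1:ℝ)) := by
      funext ω
      rcases hval i ω with h | h <;> simp [Set.indicator_apply, h, Set.mem_setOf_eq]
    rw [this]
    exact (integrable_const (1:ℝ)).indicator hs
  have hEX : ∀ i, ∫ ω, X i ω ∂μ = p := by
    intro i
    have hs : MeasurableSet {ω | X i ω = 1} := (hmeas i) (measurableSet_singleton 1)
    have h : X i = Set.indicator {ω | X i ω = 1} (fun _ => (1:ℝ)) := by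
      funext ω
      rcases hval i ω with h | h <;> simp [Set.indicator_apply, h, Set.mem_setOf_eq]
    calc ∫ ω, X i ω ∂μ = ∫ ω, Set.indicator {ω | X i ω = 1} (fun _ => (1:ℝ)) ω ∂μ := by rw [← h]
      _ = (μ {ω | X i ω = 1}).toReal • (1:ℝ) := integral_indicator_const _ hs
      _ = p := by rw [hbern i, ENNReal.toReal_ofReal hp0]; simp
  -- exp(t * X i) rewritten affinely
  have hexp_eq : ∀ i, (fun ω => Real.exp (t * X i ω))
      = fun ω => 1 + (Real.exp t - 1) * X i ω := by
    intro i
    funext ω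
    rcases hval i ω with h | h <;> simp [h]
  have hint : ∀ i, Integrable (fun ω => Real.exp (t * X i ω)) μ := by
    intro i
    rw [hexp_eq i]
    exact (integrable_const (1:ℝ)).add ((hXint i).const_mul _)
  have hmgf : ∀ i, mgf (X i) μ t = 1 + (Real.exp t - 1) * p := by
    intro i
    rw [mgf, hexp_eq i]
    rw [integral_add (integrable_const _) ((hXint i).const_mul _)]
    rw [integral_const, integral_const_mul, hEX i]
    simp
  -- Chernoff bound on the sum
  have hintsum : Integrable (fun ω => Real.exp (t * (∑ i, X i) ω)) μ :=
    hindep.integrable_exp_mul_sum hmeas (fun i _ => hint i)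
  have hcher := measure_le_le_exp_mul_mgf (X := ∑ i, X i) (μ := μ)
      ((1 - δ) * m * p) ht hintsum
  have hset : {ω | (∑ i, X i) ω ≤ (1 - δ) * m * p}
      = {ω | ∑ i, X i ω ≤ (1 - δ) * m * p} := by
    ext ω; simp [Finset.sum_apply]
  rw [hset] at hcher
  have hmgfsum : mgf (∑ i, X i) μ t = (1 + (Real.exp t - 1) * p) ^ m := by
    rw [hindep.mgf_sum hmeas]
    simp [hmgf]
  rw [hmgfsum, het] at hcher
  -- bound the RHS
  have hbase0 : (0:ℝ) ≤ 1 + (1 - δ - 1) * p := by nlinarith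
  have hbase : 1 + (1 - δ - 1) * p ≤ Real.exp ((1 - δ - 1) * p) := by
    have := Real.add_one_le_exp ((1 - δ - 1) * p)
    linarith
  have hpow : (1 + (1 - δ - 1) * p) ^ m ≤ Real.exp ((m:ℝ) * ((1 - δ - 1) * p)) := by
    calc (1 + (1 - δ - 1) * p) ^ m ≤ (Real.exp ((1 - δ - 1) * p)) ^ m :=
          pow_le_pow_left₀ hbase0 hbase m
      _ = Real.exp ((m:ℝ) * ((1 - δ - 1) * p)) := by
          rw [← Real.exp_nat_mul]
  have hexpo : -t * ((1 - δ) * m * p) + (m:ℝ) * ((1 - δ - 1) * p)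
      ≤ -(δ ^ 2 * m * p) / 2 := by
    have hkey := chernoff_key hδ0 hδ1
    have hmp : (0:ℝ) ≤ (m:ℝ) * p := mul_nonneg (Nat.cast_nonneg m) hp0
    nlinarith [mul_le_mul_of_nonneg_right hkey hmp]
  have hRHS : Real.exp (-t * ((1 - δ) * m * p)) * (1 + (1 - δ - 1) * p) ^ m
      ≤ Real.exp (-(δ ^ 2 * m * p) / 2) := by
    calc Real.exp (-t * ((1 - δ) * m * p)) * (1 + (1 - δ - 1) * p) ^ m
        ≤ Real.exp (-t * ((1 - δ) * m * p)) * Real.exp ((m:ℝ) * ((1 - δ - 1) * p)) :=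
          mul_le_mul_of_nonneg_left hpow (Real.exp_nonneg _)
      _ = Real.exp (-t * ((1 - δ) * m * p) + (m:ℝ) * ((1 - δ - 1) * p)) :=
          (Real.exp_add _ _).symm
      _ ≤ Real.exp (-(δ ^ 2 * m * p) / 2) := Real.exp_le_exp.mpr hexpo
  have hfin : (μ {ω | ∑ i, X i ω ≤ (1 - δ) * m * p}).toReal
      ≤ Real.exp (-(δ ^ 2 * m * p) / 2) := le_trans hcher hRHS
  rw [← ENNReal.ofReal_toReal (measure_ne_top μ _)]
  exact ENNReal.ofReal_le_ofReal hfin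
end

section
/- Fix a real number ε with 0 ≤ ε ≤ 1. Let G be the probability mass function on Bool assigning probability 1−ε to false and ε to true, and let D be the probability mass function on Bool × Bool assigning probability 1−ε to (false, false), probability ε to (false, true), and probability 0 to all other pairs. Then: (i) the first coordinate of a sample from D equals false with probability 1, so the conditional distribution of D given that its first coordinate equals false is D itself; and (ii) when c is sampled from G and (c′, π) is sampled independently from D, the probability that c = false and π = false equals (1−ε)². -/
open scoped ENNReal

/-- Counterexample computation from Section 2.2: for the contrived NIZK where Gen
outputs crs = true with probability ε and the simulator outputs (false, false) with
probability 1−ε and (false, true) with probability ε, (i) the simulator's crs is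
false with probability 1, so conditioning the simulator on crs = false does nothing,
and (ii) the OW deciding algorithm accepts with probability exactly (1−ε)². -/
theorem counterexample_nizk
    (ε : ℝ) (hε0 : 0 ≤ ε) (hε1 : ε ≤ 1)
    (G : PMF Bool) (D : PMF (Bool × Bool))
    (hGf : G false = ENNReal.ofReal (1 - ε)) (hGt : G true = ENNReal.ofReal ε)
    (hDff : D (false, false) = ENNReal.ofReal (1 - ε))
    (hDft : D (false, true) = ENNReal.ofReal ε)
    (hDtf : D (true, false) = 0) (hDtt : D (true, true) = 0) :
    D.toMeasure {x | x.1 = false} = 1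
      ∧ (∀ h : ∃ a ∈ {x : Bool × Bool | x.1 = false}, a ∈ D.support,
          D.filter {x | x.1 = false} h = D)
      ∧ (G.bind fun c => D.map fun d => (c, d)).toMeasure
          {x : Bool × Bool × Bool | x.1 = false ∧ x.2.2 = false}
          = ENNReal.ofReal ((1 - ε) ^ 2) := by
  have hind : ∀ x : Bool × Bool, ({x : Bool × Bool | x.1 = false}).indicator D x = D x := by
    rintro ⟨c, b⟩
    cases c <;> cases b <;> simp [Set.indicator_apply, hDtf, hDtt]
  have htsum : (∑' x, ({x : Bool × Bool | x.1 = false}).indicator D x) = 1 := by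
    rw [tsum_congr hind, D.tsum_coe]
  have h1 : D.toMeasure {x | x.1 = false} = 1 := by
    rw [D.toMeasure_apply_eq_toOuterMeasure_apply _,
      PMF.toOuterMeasure_apply, htsum]
    exact (Set.to_countable _).measurableSet
  refine ⟨h1, fun h => ?_, ?_⟩
  · ext a
    rw [PMF.filter_apply, htsum, hind]
    simp
  · have hval : ∀ c b π, (G.bind fun c => D.map fun d => (c, d)) (c, b, π)
        = G c * D (b, π) := by
      intro c b π
      rw [PMF.bind_apply, tsum_bool]
      have hm : ∀ c' : Bool, (D.map fun d => (c', d)) (c, b, π)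
          = if c = c' then D (b, π) else 0 := by
        intro c'
        rw [PMF.map_apply, tsum_fintype]
        rcases eq_or_ne c c' with rfl | hc
        · simp only [if_pos rfl]
          rw [Finset.sum_eq_single (b, π)]
          · simp
          · rintro ⟨b', π'⟩ _ hne
            simp only [Prod.mk.injEq, ite_eq_right_iff]
            rintro ⟨-, rfl, rfl⟩
            exact absurd rfl hne
          · simp
        · simp only [if_neg hc]
          apply Finset.sum_eq_zero
          rintro ⟨b', π'⟩ _
          simp only [Prod.mk.injEq, ite_eq_right_iff]
          rintro ⟨rfl, _, _⟩
          exact absurd rfl hc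
      cases c <;> simp [hm]
    rw [PMF.toMeasure_apply_eq_toOuterMeasure_apply _ _,
      PMF.toOuterMeasure_apply, tsum_fintype]
    have : ∀ x : Bool × Bool × Bool,
        ({x : Bool × Bool × Bool | x.1 = false ∧ x.2.2 = false}).indicator
          (G.bind fun c => D.map fun d => (c, d)) x
        = if x ∈ ({(false, false, false), (false, true, false)} :
              Finset (Bool × Bool × Bool))
            then (G.bind fun c => D.map fun d => (c, d)) x else 0 := by
      rintro ⟨(_|_), b, (_|_)⟩ <;> cases b <;>
        simp [Set.indicator_apply]
    rw [Finset.sum_congr rfl fun x _ => this x, Finset.sum_ite_mem,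
      Finset.univ_inter, Finset.sum_insert (by decide), Finset.sum_singleton,
      hval, hval, hGf, hDff, hDtf, mul_zero, add_zero,
      ← ENNReal.ofReal_mul (by linarith), ← sq]
    exact (Set.to_countable _).measurableSet
end
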